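/- Let p and q be probability distributions on a finite set, q with full support, N ≥ 2, and q̃ = (1−1/N)q + (1/N)p. For any event E on N-tuples, Pr_{S∼q^N}(E) ≥ 1 − Pr_{S∼q̃^N}(¬E) / (1 − 1/N)^N; in particular if Pr_{S∼q̃^N}(E) ≥ 1 − δ then Pr_{S∼q^N}(E) ≥ 1 − 4δ. -/

import Mathlib

open MeasureTheory ENNReal Set

private lemma bern_aux (b : ℝ) (hb : 0 < b) :
    ∀ n : ℕ, b^(n+1) + (n+1) * b^n ≤ (b+1)^(n+1) := by
  intro n
  induction n with
  | zero => simp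
  | succ m ih =>
    have h1 : (b+1)^(m+1+1) = (b+1)^(m+1) * (b+1) := by ring
    have hp : (0:ℝ) < b^m := pow_pos hb m
    have h2 : (b^(m+1) + ((m:ℝ)+1) * b^m) * (b+1) ≤ (b+1)^(m+1) * (b+1) := by
      apply mul_le_mul_of_nonneg_right ih; linarith
    have e : (b^(m+1) + ((m:ℝ)+1) * b^m) * (b+1)
        = b^(m+1+1) + ((m:ℝ)+1+1)*b^(m+1) + ((m:ℝ)+1)*b^m := by ring
    push_cast
    nlinarith [hp, h1, h2, e]

private lemma quarter_aux : ∀ n : ℕ, 2 ≤ n → (1/4 : ℝ) ≤ (1 - 1/(n:ℝ))^n := by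
  intro n hn
  induction n, hn using Nat.le_induction with
  | base => norm_num
  | succ n hn ih =>
    have ha : (2:ℝ) ≤ (n:ℝ) := by exact_mod_cast hn
    have ha0 : (0:ℝ) < (n:ℝ) := by linarith
    have ha1 : (0:ℝ) < (n:ℝ) + 1 := by linarith
    set a : ℝ := (n:ℝ) with haa
    have key : ((a-1)/a)^n ≤ (a/(a+1))^(n+1) := by
      rw [div_pow, div_pow, div_le_div_iff₀ (pow_pos ha0 n) (pow_pos ha1 (n+1))]
      obtain ⟨m, rfl⟩ : ∃ m, n = m + 1 := ⟨n - 1, by omega⟩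
      have hb : (0:ℝ) < a ^ 2 - 1 := by nlinarith
      have hB := bern_aux (a^2-1) hb m
      have hmul : (a-1)*(a+1) = a^2 - 1 := by ring
      have e1 : (a-1)^(m+1) * (a+1)^(m+1+1) = (a+1) * (a^2-1)^(m+1) := by
        rw [← hmul, mul_pow]; ring
      have e2 : a^(m+1+1) * a^(m+1) = a * (a^2-1+1)^(m+1) := by
        have h : a^2 - 1 + 1 = a*a := by ring
        rw [h, mul_pow]; ring
      rw [e1, e2]
      have han : a = (m:ℝ) + 1 := by rw [haa]; push_cast; ring
      have hbm : (0:ℝ) < (a^2-1)^m := pow_pos hb m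
      have hps : (a^2-1)^(m+1) = (a^2-1)^m * (a^2-1) := pow_succ _ m
      have h2 : a * ((a^2-1)^(m+1) + ((m:ℝ)+1) * (a^2-1)^m) ≤ a * (a^2-1+1)^(m+1) :=
        mul_le_mul_of_nonneg_left hB (le_of_lt ha0)
      have h4 : a * (((m:ℝ)+1) * (a^2-1)^m) = a^2 * (a^2-1)^m := by rw [han]; ring
      have h5 : (a^2-1)^(m+1) ≤ a^2 * (a^2-1)^m := by rw [hps]; nlinarith [hbm]
      have h3 : (a+1) * (a^2-1)^(m+1) ≤ a * ((a^2-1)^(m+1) + ((m:ℝ)+1) * (a^2-1)^m) := by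
        nlinarith [h4, h5]
      linarith
    have e3 : (1 - 1/a) = (a-1)/a := by field_simp
    have e4 : (1 - 1/((n:ℕ)+1:ℝ)) = a/(a+1) := by
      rw [haa]; field_simp; ring
    calc (1/4:ℝ) ≤ (1-1/a)^n := ih
    _ ≤ (a/(a+1))^(n+1) := by rw [e3]; exact key
    _ = (1 - 1/(((n:ℕ):ℝ)+1))^(n+1) := by rw [e4]
    _ = (1 - 1/((((n+1):ℕ)):ℝ))^(n+1) := by push_cast; ring

private lemma my_pi_mono {ι : Type*} [Fintype ι] {α : ι → Type*} [∀ i, MeasurableSpace (α i)]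
    (μ ν : ∀ i, Measure (α i)) (h : ∀ i, μ i ≤ ν i) (s : Set (∀ i, α i))
    (hs : MeasurableSet s) :
    Measure.pi μ s ≤ Measure.pi ν s := by
  have houter : OuterMeasure.pi (fun i => (μ i).toOuterMeasure)
      ≤ OuterMeasure.pi (fun i => (ν i).toOuterMeasure) := by
    refine OuterMeasure.le_pi.mpr fun t ht => (OuterMeasure.pi_pi_le _ t).trans ?_
    refine Finset.prod_le_prod' fun i _ => ?_
    simpa using Measure.le_iff'.1 (h i) (t i)
  rw [Measure.pi, Measure.pi]
  rw [toMeasure_apply _ _ hs, toMeasure_apply _ _ hs]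
  exact houter s

private lemma my_pi_smul {X : Type*} [MeasurableSpace X] (c : ℝ≥0∞) (hc : c ≠ ∞)
    (q : Measure X) [IsFiniteMeasure q] (N : ℕ) :
    Measure.pi (fun _ : Fin N => c • q) = c ^ N • Measure.pi (fun _ : Fin N => q) := by
  haveI : IsFiniteMeasure (c • q) := by
    constructor
    rw [Measure.smul_apply, smul_eq_mul]
    exact ENNReal.mul_lt_top hc.lt_top (measure_lt_top q _)
  apply Measure.pi_eq
  intro s hs
  rw [Measure.smul_apply, smul_eq_mul, Measure.pi_pi]
  simp only [Measure.smul_apply, smul_eq_mul]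
  rw [Finset.prod_mul_distrib, Finset.prod_const, Finset.card_univ, Fintype.card_fin]

/-- Coupling argument: for the mixture `q̃ = (1-1/N) q + (1/N) p`,
`Pr_{q^N}(E) ≥ 1 − Pr_{q̃^N}(¬E) / (1−1/N)^N`; in particular, if
`Pr_{q̃^N}(E) ≥ 1 − δ` then `Pr_{q^N}(E) ≥ 1 − 4δ`. -/
theorem mixture_coupling {X : Type*} [Fintype X] [MeasurableSpace X]
    [MeasurableSingletonClass X]
    (p q : Measure X) [IsProbabilityMeasure p] [IsProbabilityMeasure q]
    (hq : ∀ x : X, q {x} ≠ 0) (N : ℕ) (hN : 2 ≤ N)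
    (qt : Measure X)
    (hqt : qt = (1 - 1 / (N : ℝ≥0∞)) • q + (1 / (N : ℝ≥0∞)) • p)
    (E : Set (Fin N → X)) (hE : MeasurableSet E) (δ : ℝ) :
    ((Measure.pi fun _ : Fin N => q) E).toReal ≥
        1 - ((Measure.pi fun _ : Fin N => qt) Eᶜ).toReal /
          (1 - 1 / (N : ℝ)) ^ N ∧
      (((Measure.pi fun _ : Fin N => qt) E).toReal ≥ 1 - δ →
        ((Measure.pi fun _ : Fin N => q) E).toReal ≥ 1 - 4 * δ) := by
  have hN1 : (1:ℝ≥0∞) ≤ (N:ℝ≥0∞) := by exact_mod_cast Nat.one_le_of_lt hN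
  have hdiv1 : 1 / (N:ℝ≥0∞) ≤ 1 := ENNReal.div_le_of_le_mul (by simpa using hN1)
  have hqtu : qt univ = 1 := by
    rw [hqt]
    simp only [Measure.coe_add, Measure.coe_smul, Pi.add_apply, Pi.smul_apply,
      smul_eq_mul, measure_univ, mul_one]
    exact tsub_add_cancel_of_le hdiv1
  haveI : IsProbabilityMeasure qt := ⟨hqtu⟩
  set c : ℝ≥0∞ := 1 - 1/(N:ℝ≥0∞) with hc
  have hcne : c ≠ ∞ := (tsub_le_self.trans_lt one_lt_top).ne
  have hle : c • q ≤ qt := by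
    rw [hqt]
    exact Measure.le_iff'.2 fun s => by
      simp only [Measure.coe_add, Pi.add_apply]; exact le_self_add
  have hctr : c.toReal = 1 - 1/(N:ℝ) := by
    rw [hc, ENNReal.toReal_sub_of_le hdiv1 one_ne_top]
    simp [ENNReal.toReal_div]
  haveI hfin : IsFiniteMeasure (c • q) := by
    constructor
    rw [Measure.smul_apply, smul_eq_mul]
    exact ENNReal.mul_lt_top hcne.lt_top (measure_lt_top q _)
  have key : c^N * (Measure.pi fun _ : Fin N => q) Eᶜ
      ≤ (Measure.pi fun _ : Fin N => qt) Eᶜ := by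
    have h1 : (Measure.pi fun _ : Fin N => c • q) Eᶜ
        ≤ (Measure.pi fun _ : Fin N => qt) Eᶜ :=
      my_pi_mono _ _ (fun _ => hle) _ hE.compl
    rw [my_pi_smul c hcne q N] at h1
    simpa [Measure.smul_apply, smul_eq_mul] using h1
  set r : ℝ := 1 - 1/(N:ℝ) with hr
  have hNR : (2:ℝ) ≤ (N:ℝ) := by exact_mod_cast hN
  have hrpos : 0 < r := by
    have h12 : 1/(N:ℝ) ≤ 1/2 := by
      apply one_div_le_one_div_of_le <;> linarith
    rw [hr]; linarith
  have hr4 : (1/4:ℝ) ≤ r^N := quarter_aux N hN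
  have hrNpos : 0 < r^N := pow_pos hrpos N
  set A : ℝ := ((Measure.pi fun _ : Fin N => q) E).toReal with hA
  set B : ℝ := ((Measure.pi fun _ : Fin N => qt) Eᶜ).toReal with hB
  have hq_compl : ((Measure.pi fun _ : Fin N => q) Eᶜ).toReal = 1 - A := by
    rw [hA, measure_compl hE (measure_ne_top _ _), measure_univ,
      ENNReal.toReal_sub_of_le prob_le_one one_ne_top, ENNReal.toReal_one]
  have hqt_compl : B = 1 - ((Measure.pi fun _ : Fin N => qt) E).toReal := by
    rw [hB, measure_compl hE (measure_ne_top _ _), measure_univ,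
      ENNReal.toReal_sub_of_le prob_le_one one_ne_top, ENNReal.toReal_one]
  have hcNtr : (c^N).toReal = r^N := by rw [ENNReal.toReal_pow, hctr]
  have keyR : r^N * (1 - A) ≤ B := by
    have h := ENNReal.toReal_mono (measure_ne_top _ _) key
    rwa [ENNReal.toReal_mul, hcNtr, hq_compl] at h
  have h1 : 1 - A ≤ B / r^N := by
    rw [le_div_iff₀ hrNpos]; linarith [keyR]
  constructor
  · linarith
  · intro h
    have hB0 : 0 ≤ B := ENNReal.toReal_nonneg
    have hBδ : B ≤ δ := by rw [hqt_compl]; linarith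
    have h2 : B / r^N ≤ 4*B := by
      rw [div_le_iff₀ hrNpos]; nlinarith
    linarith
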